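/- arXiv:1503.05990 — 2 statements merged into one kernel-verified Lean document; each statement's English description precedes it below -/
import Mathlib

section
/- Fix p ∈ ℝ and a measure ν on ℝ with ∫ (e^{p²z/2} − 1) dν(z) < ∞ and ν supported on (0,∞). Consider the operator L₁f(y) = −y f'(y) + ∫ (f(y+z) − f(y)) dν(z) and the potential V(y) = (1/2) y p². Then the function f(y) = exp((p²/2) y) satisfies the eigenvalue equation L₁ f(y) + V(y) f(y) = λ f(y) for all y ∈ ℝ, with eigenvalue λ = ∫ (e^{p²z/2} − 1) dν(z). -/
open MeasureTheory Real

/-- Explicit solution of the eigenvalue problem for the BNS stochastic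
volatility model: `f(y) = exp(p²y/2)` satisfies
`L₁ f + V f = λ f` with `λ = ∫ (e^{p²z/2} − 1) dν`. -/
theorem stmt_3
    (p : ℝ) (ν : Measure ℝ)
    (hsupp : ν (Set.Iic 0) = 0)
    (hint : Integrable (fun z => Real.exp (p ^ 2 * z / 2) - 1) ν) :
    ∀ y : ℝ,
      (-y * deriv (fun y => Real.exp (p ^ 2 / 2 * y)) y
          + ∫ z, (Real.exp (p ^ 2 / 2 * (y + z)) - Real.exp (p ^ 2 / 2 * y)) ∂ν)
        + (1 / 2 * y * p ^ 2) * Real.exp (p ^ 2 / 2 * y)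
      = (∫ z, (Real.exp (p ^ 2 * z / 2) - 1) ∂ν) * Real.exp (p ^ 2 / 2 * y) := by
  intro y
  have hd : deriv (fun y => Real.exp (p ^ 2 / 2 * y)) y
      = p ^ 2 / 2 * Real.exp (p ^ 2 / 2 * y) := by
    have : HasDerivAt (fun y => Real.exp (p ^ 2 / 2 * y))
        (Real.exp (p ^ 2 / 2 * y) * (p ^ 2 / 2)) y :=
      (Real.hasDerivAt_exp _).comp y (by simpa using (hasDerivAt_id y).const_mul (p ^ 2 / 2))
    rw [this.deriv]; ring
  have hi : (∫ z, (Real.exp (p ^ 2 / 2 * (y + z)) - Real.exp (p ^ 2 / 2 * y)) ∂ν)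
      = Real.exp (p ^ 2 / 2 * y) * ∫ z, (Real.exp (p ^ 2 * z / 2) - 1) ∂ν := by
    rw [← integral_const_mul]
    congr 1; ext z
    rw [mul_sub, mul_one, ← Real.exp_add]
    ring_nf
  rw [hd, hi]; ring
end

section
/- Let a, b > 0, H(p) = a·ln(2b/(2b−p²)) for p² < 2b (and +∞ otherwise), and for q > 0 define L(q) = −a + √(a² + 2bq²) − a·ln(2b) + a·ln( (−2a² + 2a√(a² + 2bq²))/q² ). Then L(q) = sup_{|p|<√(2b)} (pq − H(p)) for every q > 0; i.e., L is the Legendre transform of H on (0, ∞). -/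
/-- Legendre transform of the gamma-BDLP Hamiltonian: for `q > 0`,
`L(q) = sup_{|p|<√(2b)} (pq − H(p))` with the stated explicit formula. -/
theorem stmt_6 (a b : ℝ) (ha : 0 < a) (hb : 0 < b) (q : ℝ) (hq : 0 < q) :
    IsLUB {v : ℝ | ∃ p : ℝ, p ^ 2 < 2 * b ∧
        v = p * q - a * Real.log (2 * b / (2 * b - p ^ 2))}
      (-a + Real.sqrt (a ^ 2 + 2 * b * q ^ 2) - a * Real.log (2 * b)
        + a * Real.log
            ((-2 * a ^ 2 + 2 * a * Real.sqrt (a ^ 2 + 2 * b * q ^ 2)) / q ^ 2)) := by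
  set s := Real.sqrt (a ^ 2 + 2 * b * q ^ 2) with hs_def
  have hsum : (0:ℝ) < a ^ 2 + 2 * b * q ^ 2 := by positivity
  have hs2 : s ^ 2 = a ^ 2 + 2 * b * q ^ 2 := Real.sq_sqrt hsum.le
  have has : a < s := by
    rw [hs_def]
    rw [show a = Real.sqrt (a ^ 2) by rw [Real.sqrt_sq ha.le]]
    apply Real.sqrt_lt_sqrt (by positivity)
    nlinarith [Real.sq_sqrt (sq_nonneg a), mul_pos hb (pow_pos hq 2)]
  set P := (s - a) / q with hP_def
  have hPpos : 0 < P := div_pos (by linarith) hq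
  have hq2 : (q:ℝ) ^ 2 ≠ 0 := by positivity
  have hD : 2 * b - P ^ 2 = 2 * a * (s - a) / q ^ 2 := by
    rw [hP_def]
    field_simp
    nlinarith [hs2]
  have hDpos : 0 < 2 * b - P ^ 2 := by
    rw [hD]
    have hsa : 0 < s - a := by linarith
    positivity
  have hP2 : P ^ 2 < 2 * b := by linarith
  -- value at P equals the claimed supremum
  have hlogD : Real.log (2 * b / (2 * b - P ^ 2)) =
      Real.log (2 * b) - Real.log ((-2 * a ^ 2 + 2 * a * s) / q ^ 2) := by
    rw [Real.log_div (by positivity) (by linarith), hD]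
    ring_nf
  have hPq : P * q = s - a := by
    rw [hP_def]; field_simp
  have hL : P * q - a * Real.log (2 * b / (2 * b - P ^ 2)) =
      -a + s - a * Real.log (2 * b) +
        a * Real.log ((-2 * a ^ 2 + 2 * a * s) / q ^ 2) := by
    rw [hlogD, hPq]; ring
  constructor
  · rintro v ⟨p, hp, rfl⟩
    rw [← hL]
    have hDp : 0 < 2 * b - p ^ 2 := by linarith
    have hqD : q * (2 * b - P ^ 2) = 2 * a * P := by
      rw [hD, hP_def]; field_simp
    have key : Real.log (2 * b / (2 * b - p ^ 2)) - Real.log (2 * b / (2 * b - P ^ 2))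
        = -Real.log ((2 * b - p ^ 2) / (2 * b - P ^ 2)) := by
      rw [Real.log_div (by positivity) hDp.ne', Real.log_div (by positivity) hDpos.ne',
        Real.log_div hDp.ne' hDpos.ne']
      ring
    have hlog2 : Real.log ((2 * b - p ^ 2) / (2 * b - P ^ 2))
        ≤ (2 * b - p ^ 2) / (2 * b - P ^ 2) - 1 :=
      Real.log_le_sub_one_of_pos (by positivity)
    have hlog2a : a * Real.log ((2 * b - p ^ 2) / (2 * b - P ^ 2))
        ≤ a * ((2 * b - p ^ 2) / (2 * b - P ^ 2) - 1) :=
      mul_le_mul_of_nonneg_left hlog2 ha.le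
    have hC : a * ((2 * b - p ^ 2) / (2 * b - P ^ 2) - 1)
        = a * ((P ^ 2 - p ^ 2) / (2 * b - P ^ 2)) := by
      rw [div_sub_one hDpos.ne']
      ring_nf
    have h2 : (P - p) * (q * (2 * b - P ^ 2)) = (P - p) * (2 * a * P) := by rw [hqD]
    have h1 : a * ((P ^ 2 - p ^ 2) / (2 * b - P ^ 2)) ≤ (P - p) * q := by
      rw [← mul_div_assoc, div_le_iff₀ hDpos]
      nlinarith [h2, mul_nonneg ha.le (sq_nonneg (P - p))]
    have hkey' : a * Real.log (2 * b / (2 * b - p ^ 2))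
        - a * Real.log (2 * b / (2 * b - P ^ 2))
        = -(a * Real.log ((2 * b - p ^ 2) / (2 * b - P ^ 2))) := by
      linear_combination a * key
    linarith [hkey', hlog2a, hC.le, hC.ge, h1]
  · intro v hv
    have := hv ⟨P, hP2, hL.symm⟩
    linarith [this, hL]
end
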